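/- arXiv:2507.02491 — 4 statements merged into one kernel-verified Lean document; each statement's English description precedes it below -/
import Mathlib

section
/- Propositional equivalence of LTLf formulas implies language equivalence: if α ≡ β (their propositional abstractions α_P and β_P are equivalent Boolean formulas), then L(α) = L(β), i.e., for every finite nonempty word σ, σ,0 ⊨ α iff σ,0 ⊨ β. -/
inductive LTLf (P : Type) : Type where
  | tt : LTLf P
  | ff : LTLf P
  | atom (p : P) : LTLf P
  | not (φ : LTLf P) : LTLf P
  | and (φ ψ : LTLf P) : LTLf P
  | or (φ ψ : LTLf P) : LTLf P
  | wnext (φ : LTLf P) : LTLf P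
  | snext (φ : LTLf P) : LTLf P
  | untl (φ ψ : LTLf P) : LTLf P
  | release (φ ψ : LTLf P) : LTLf P
  | glob (φ : LTLf P) : LTLf P
  | fin (φ : LTLf P) : LTLf P
  deriving DecidableEq

/-- LTLf semantics over a finite word `σ` (a list of assignments), at position `i`. -/
def LTLf.Sat {P : Type} (σ : List (P → Bool)) : LTLf P → ℕ → Prop
  | .tt, _ => True
  | .ff, _ => False
  | .atom p, i => (σ.getD i (fun _ => false)) p = true
  | .not φ, i => ¬ LTLf.Sat σ φ i
  | .and φ ψ, i => LTLf.Sat σ φ i ∧ LTLf.Sat σ ψ i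
  | .or φ ψ, i => LTLf.Sat σ φ i ∨ LTLf.Sat σ ψ i
  | .wnext φ, i => i + 1 = σ.length ∨ LTLf.Sat σ φ (i + 1)
  | .snext φ, i => i + 1 < σ.length ∧ LTLf.Sat σ φ (i + 1)
  | .untl φ ψ, i => ∃ j, i ≤ j ∧ j < σ.length ∧ LTLf.Sat σ ψ j ∧
      ∀ k, i ≤ k → k < j → LTLf.Sat σ φ k
  | .release φ ψ, i => ∀ j, i ≤ j → j < σ.length →
      LTLf.Sat σ ψ j ∨ ∃ k, i ≤ k ∧ k < j ∧ LTLf.Sat σ φ k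
  | .glob φ, i => ∀ j, i ≤ j → j < σ.length → LTLf.Sat σ φ j
  | .fin φ, i => ∃ j, i ≤ j ∧ j < σ.length ∧ LTLf.Sat σ φ j

/-- Boolean evaluation of the propositional abstraction of an LTLf formula:
atoms and maximal temporal subformulas are treated as propositional variables,
interpreted by a valuation `v`. -/
def LTLf.BEval {P : Type} (v : LTLf P → Prop) : LTLf P → Prop
  | .tt => True
  | .ff => False
  | .not φ => ¬ LTLf.BEval v φ
  | .and φ ψ => LTLf.BEval v φ ∧ LTLf.BEval v ψ
  | .or φ ψ => LTLf.BEval v φ ∨ LTLf.BEval v ψ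
  | φ => v φ

/-- Propositional equivalence: the propositional abstractions are equivalent
Boolean formulas, i.e., agree under every valuation of the variables. -/
def LTLf.PropEquiv {P : Type} (α β : LTLf P) : Prop :=
  ∀ v : LTLf P → Prop, LTLf.BEval v α ↔ LTLf.BEval v β

lemma LTLf.beval_sat {P : Type} (σ : List (P → Bool)) (i : ℕ) :
    ∀ φ : LTLf P, LTLf.BEval (fun ψ => LTLf.Sat σ ψ i) φ ↔ LTLf.Sat σ φ i := by
  intro φ
  induction φ with
  | tt => simp [LTLf.BEval, LTLf.Sat]
  | ff => simp [LTLf.BEval, LTLf.Sat]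
  | atom p => simp [LTLf.BEval]
  | not φ ih => simp [LTLf.BEval, LTLf.Sat, ih]
  | and φ ψ ih1 ih2 => simp [LTLf.BEval, LTLf.Sat, ih1, ih2]
  | or φ ψ ih1 ih2 => simp [LTLf.BEval, LTLf.Sat, ih1, ih2]
  | _ => simp [LTLf.BEval]

theorem propEquiv_implies_language_equiv {P : Type} (α β : LTLf P)
    (h : LTLf.PropEquiv α β) :
    ∀ σ : List (P → Bool), σ ≠ [] → (LTLf.Sat σ α 0 ↔ LTLf.Sat σ β 0) := by
  intro σ _
  have := h (fun ψ => LTLf.Sat σ ψ 0)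
  rwa [LTLf.beval_sat, LTLf.beval_sat] at this
end

section
/- An ordered, reduced MTBDD representation is canonical: two functions f, g : B^P → S (with P finitely ordered) have the same reduced ordered MTBDD if and only if f = g. -/
/-- MTBDDs (as decision trees; sharing of isomorphic subgraphs corresponds to
equality of subtrees) over variables `Fin n` with terminal values in `S`. -/
inductive MTBDD (n : ℕ) (S : Type) : Type where
  | leaf (s : S) : MTBDD n S
  | node (p : Fin n) (lo hi : MTBDD n S) : MTBDD n S
  deriving DecidableEq

namespace MTBDD

/-- The function `B^P → S` denoted by an MTBDD. -/
def eval {n : ℕ} {S : Type} : MTBDD n S → (Fin n → Bool) → S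
  | .leaf s, _ => s
  | .node p lo hi, w => if w p then eval hi w else eval lo w

/-- All branches test variables in strictly increasing order, starting at least at `b`. -/
def OrderedFrom {n : ℕ} {S : Type} : ℕ → MTBDD n S → Prop
  | _, .leaf _ => True
  | b, .node p lo hi => b ≤ (p : ℕ) ∧ OrderedFrom ((p : ℕ) + 1) lo ∧ OrderedFrom ((p : ℕ) + 1) hi

/-- Ordered MTBDD. -/
def Ordered {n : ℕ} {S : Type} (m : MTBDD n S) : Prop := OrderedFrom 0 m

/-- Reduced MTBDD: no internal node has identical low and high successors
(isomorphic subgraphs being shared, they are represented by equal subtrees). -/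
def Reduced {n : ℕ} {S : Type} : MTBDD n S → Prop
  | .leaf _ => True
  | .node _ lo hi => lo ≠ hi ∧ Reduced lo ∧ Reduced hi

lemma eval_congr {n : ℕ} {S : Type} (m : MTBDD n S) :
    ∀ (b : ℕ), OrderedFrom b m → ∀ w w' : Fin n → Bool,
      (∀ i : Fin n, b ≤ (i : ℕ) → w i = w' i) → eval m w = eval m w' := by
  induction m with
  | leaf s => intros; rfl
  | node p lo hi ihl ihh =>
    rintro b ⟨hb, hlo, hhi⟩ w w' hw
    have hww' : ∀ i : Fin n, (p : ℕ) + 1 ≤ (i : ℕ) → w i = w' i := fun i hi =>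
      hw i (le_trans hb (Nat.le_of_succ_le hi))
    have hp : w p = w' p := hw p hb
    simp only [eval, hp]
    cases w' p with
    | false => exact ihl _ hlo _ _ hww'
    | true => exact ihh _ hhi _ _ hww'

lemma orderedFrom_mono {n : ℕ} {S : Type} {m : MTBDD n S} {b b' : ℕ}
    (h : b' ≤ b) (hm : OrderedFrom b m) : OrderedFrom b' m := by
  cases m with
  | leaf s => trivial
  | node p lo hi => exact ⟨le_trans h hm.1, hm.2.1, hm.2.2⟩

lemma eval_update {n : ℕ} {S : Type} {m : MTBDD n S} {b : ℕ} (hm : OrderedFrom b m)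
    (p : Fin n) (hp : (p : ℕ) < b) (w : Fin n → Bool) (x : Bool) :
    eval m (Function.update w p x) = eval m w := by
  refine eval_congr m b hm _ _ (fun i hi => ?_)
  have : i ≠ p := fun h => by subst h; exact absurd hi (not_le.mpr hp)
  simp [Function.update, this]

theorem canon {n : ℕ} {S : Type} (b : ℕ) (m₁ m₂ : MTBDD n S)
    (h₁o : OrderedFrom b m₁) (h₁r : Reduced m₁)
    (h₂o : OrderedFrom b m₂) (h₂r : Reduced m₂)
    (he : ∀ w : Fin n → Bool, eval m₁ w = eval m₂ w) : m₁ = m₂ := by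
  match m₁, m₂ with
  | .leaf s, .leaf t =>
    have := he (fun _ => false)
    simp only [eval] at this
    rw [this]
  | .leaf s, .node p lo hi =>
    exfalso
    obtain ⟨hb, hlo, hhi⟩ := h₂o
    obtain ⟨hne, hrlo, hrhi⟩ := h₂r
    apply hne
    refine canon ((p : ℕ) + 1) lo hi hlo hrlo hhi hrhi (fun w => ?_)
    have e0 : eval (MTBDD.leaf s : MTBDD n S) (Function.update w p false)
        = eval (.node p lo hi) (Function.update w p false) := he _
    have e1 : eval (MTBDD.leaf s : MTBDD n S) (Function.update w p true)
        = eval (.node p lo hi) (Function.update w p true) := he _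
    simp only [eval, Function.update_self, if_true, if_false, Bool.false_eq_true] at e0 e1
    rw [eval_update hlo p (Nat.lt_succ_self _) w false] at e0
    rw [eval_update hhi p (Nat.lt_succ_self _) w true] at e1
    rw [← e0, ← e1]
  | .node p lo hi, .leaf s =>
    exfalso
    obtain ⟨hb, hlo, hhi⟩ := h₁o
    obtain ⟨hne, hrlo, hrhi⟩ := h₁r
    apply hne
    refine canon ((p : ℕ) + 1) lo hi hlo hrlo hhi hrhi (fun w => ?_)
    have e0 : eval (.node p lo hi) (Function.update w p false)
        = eval (MTBDD.leaf s : MTBDD n S) (Function.update w p false) := he _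
    have e1 : eval (.node p lo hi) (Function.update w p true)
        = eval (MTBDD.leaf s : MTBDD n S) (Function.update w p true) := he _
    simp only [eval, Function.update_self, if_true, if_false, Bool.false_eq_true] at e0 e1
    rw [eval_update hlo p (Nat.lt_succ_self _) w false] at e0
    rw [eval_update hhi p (Nat.lt_succ_self _) w true] at e1
    rw [e0, e1]
  | .node p₁ lo₁ hi₁, .node p₂ lo₂ hi₂ =>
    obtain ⟨hb₁, hlo₁, hhi₁⟩ := h₁o
    obtain ⟨hne₁, hrlo₁, hrhi₁⟩ := h₁r
    obtain ⟨hb₂, hlo₂, hhi₂⟩ := h₂o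
    obtain ⟨hne₂, hrlo₂, hrhi₂⟩ := h₂r
    rcases lt_trichotomy ((p₁ : ℕ)) ((p₂ : ℕ)) with hlt | heq | hgt
    · exfalso
      apply hne₁
      refine canon ((p₁ : ℕ) + 1) lo₁ hi₁ hlo₁ hrlo₁ hhi₁ hrhi₁ (fun w => ?_)
      have ho₂ : OrderedFrom ((p₁ : ℕ) + 1) (MTBDD.node p₂ lo₂ hi₂) :=
        ⟨hlt, hlo₂, hhi₂⟩
      have e0 := he (Function.update w p₁ false)
      have e1 := he (Function.update w p₁ true)
      rw [eval_update ho₂ p₁ (Nat.lt_succ_self _) w false] at e0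
      rw [eval_update ho₂ p₁ (Nat.lt_succ_self _) w true] at e1
      simp only [eval, Function.update_self, if_true, if_false, Bool.false_eq_true] at e0 e1
      rw [eval_update hlo₁ p₁ (Nat.lt_succ_self _) w false] at e0
      rw [eval_update hhi₁ p₁ (Nat.lt_succ_self _) w true] at e1
      rw [e0, e1]
    · have hp : p₁ = p₂ := Fin.ext heq
      subst hp
      have hl : lo₁ = lo₂ := by
        refine canon ((p₁ : ℕ) + 1) lo₁ lo₂ hlo₁ hrlo₁ hlo₂ hrlo₂ (fun w => ?_)
        have e0 := he (Function.update w p₁ false)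
        simp only [eval, Function.update_self, if_false, Bool.false_eq_true] at e0
        rw [eval_update hlo₁ p₁ (Nat.lt_succ_self _) w false,
            eval_update hlo₂ p₁ (Nat.lt_succ_self _) w false] at e0
        exact e0
      have hh : hi₁ = hi₂ := by
        refine canon ((p₁ : ℕ) + 1) hi₁ hi₂ hhi₁ hrhi₁ hhi₂ hrhi₂ (fun w => ?_)
        have e1 := he (Function.update w p₁ true)
        simp only [eval, Function.update_self, if_true] at e1
        rw [eval_update hhi₁ p₁ (Nat.lt_succ_self _) w true,
            eval_update hhi₂ p₁ (Nat.lt_succ_self _) w true] at e1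
        exact e1
      rw [hl, hh]
    · exfalso
      apply hne₂
      refine canon ((p₂ : ℕ) + 1) lo₂ hi₂ hlo₂ hrlo₂ hhi₂ hrhi₂ (fun w => ?_)
      have ho₁ : OrderedFrom ((p₂ : ℕ) + 1) (MTBDD.node p₁ lo₁ hi₁) :=
        ⟨hgt, hlo₁, hhi₁⟩
      have e0 := he (Function.update w p₂ false)
      have e1 := he (Function.update w p₂ true)
      rw [eval_update ho₁ p₂ (Nat.lt_succ_self _) w false] at e0
      rw [eval_update ho₁ p₂ (Nat.lt_succ_self _) w true] at e1
      simp only [eval, Function.update_self, if_true, if_false, Bool.false_eq_true] at e0 e1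
      rw [eval_update hlo₂ p₂ (Nat.lt_succ_self _) w false] at e0
      rw [eval_update hhi₂ p₂ (Nat.lt_succ_self _) w true] at e1
      rw [← e0, ← e1]
termination_by sizeOf m₁ + sizeOf m₂
decreasing_by all_goals simp_wf <;> omega

end MTBDD

/-- Canonicity of reduced ordered MTBDDs: two reduced ordered MTBDDs represent
the same function `B^P → S` if and only if they are equal. -/
theorem mtbdd_canonicity {n : ℕ} {S : Type} (m₁ m₂ : MTBDD n S)
    (h₁o : m₁.Ordered) (h₁r : m₁.Reduced) (h₂o : m₂.Ordered) (h₂r : m₂.Reduced) :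
    (∀ w : Fin n → Bool, m₁.eval w = m₂.eval w) ↔ m₁ = m₂ := by
  constructor
  · exact MTBDD.canon 0 m₁ m₂ h₁o h₁r h₂o h₂r
  · rintro rfl w; rfl
end

section
/- The apply operation on MTBDDs is correct: for MTBDDs m₁, m₂ over the same ordered variable set P representing functions f₁ : B^P → S₁ and f₂ : B^P → S₂, and any binary operation ⊙ : S₁ × S₂ → S₃, the MTBDD m₁ ⊙ m₂ constructed by the recursive apply procedure represents the function w ↦ f₁(w) ⊙ f₂(w). -/
namespace MTBDD

/-- The recursive `apply` procedure combining two MTBDDs with a binary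
operation on terminals, recursing on the topmost variable. -/
def apply {n : ℕ} {S₁ S₂ S₃ : Type} (op : S₁ → S₂ → S₃) :
    MTBDD n S₁ → MTBDD n S₂ → MTBDD n S₃
  | .leaf a, .leaf b => .leaf (op a b)
  | .leaf a, .node q lo hi => .node q (apply op (.leaf a) lo) (apply op (.leaf a) hi)
  | .node p lo hi, .leaf b => .node p (apply op lo (.leaf b)) (apply op hi (.leaf b))
  | .node p lo hi, .node q lo' hi' =>
    if p < q then
      .node p (apply op lo (.node q lo' hi')) (apply op hi (.node q lo' hi'))
    else if q < p then
      .node q (apply op (.node p lo hi) lo') (apply op (.node p lo hi) hi')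
    else
      .node p (apply op lo lo') (apply op hi hi')
  termination_by m₁ m₂ => sizeOf m₁ + sizeOf m₂
  decreasing_by all_goals simp +arith +decide

theorem apply_correct_aux {n : ℕ} {S₁ S₂ S₃ : Type} (op : S₁ → S₂ → S₃) :
    ∀ (m₁ : MTBDD n S₁) (m₂ : MTBDD n S₂) (w : Fin n → Bool),
      (MTBDD.apply op m₁ m₂).eval w = op (m₁.eval w) (m₂.eval w) := by
  intro m₁ m₂
  induction m₁, m₂ using apply.induct with
  | case1 a b => intro w; simp [apply, eval]
  | case2 a q lo hi ih1 ih2 => intro w; simp [apply, eval, ih1, ih2]; split <;> rfl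
  | case3 p lo hi b ih1 ih2 => intro w; simp [apply, eval, ih1, ih2]; split <;> rfl
  | case4 p lo hi q lo' hi' hpq ih1 ih2 =>
      intro w; simp [apply, eval, hpq, ih1, ih2]; split <;> rfl
  | case5 p lo hi q lo' hi' hpq hqp ih1 ih2 =>
      intro w; simp [apply, eval, hpq, hqp, ih1, ih2]; split <;> rfl
  | case6 p lo hi q lo' hi' hpq hqp ih1 ih2 =>
      have : p = q := le_antisymm (not_lt.1 hqp) (not_lt.1 hpq)
      subst this
      intro w; simp [apply, eval, hpq, ih1, ih2]; split <;> rfl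

end MTBDD

/-- Correctness of `apply`: the constructed MTBDD represents the pointwise
combination of the two represented functions. -/
theorem mtbdd_apply_correct {n : ℕ} {S₁ S₂ S₃ : Type} (op : S₁ → S₂ → S₃)
    (m₁ : MTBDD n S₁) (m₂ : MTBDD n S₂)
    (h₁ : m₁.Ordered) (h₂ : m₂.Ordered) :
    ∀ w : Fin n → Bool, (MTBDD.apply op m₁ m₂).eval w = op (m₁.eval w) (m₂.eval w) := by
  intro w; exact MTBDD.apply_correct_aux op m₁ m₂ w
end

section
/- Soundness of the one-step realizability abstraction: for an LTLf formula φ over disjoint inputs I and outputs O, let φ_r be the Boolean formula obtained by the rules ff_r = ff, tt_r = tt, p_r = p, (X'α)_r = ff, (Xα)_r = tt, (Gα)_r = α_r, (Fα)_r = α_r, (αRβ)_r = β_r, (αUβ)_r = β_r, (¬α)_r = ¬α_r, (α⊙β)_r = α_r ⊙ β_r. If φ_r is realizable as a Boolean formula (there is a function g : B^I → B^O such that for all i ∈ B^I the combined assignment i ⊔ g(i) satisfies φ_r), then φ is Mealy-realizable. -/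
/-- Satisfaction of a (Boolean) formula by a single assignment; temporal
operators are treated as unsatisfied (they do not occur in one-step
abstractions). -/
def LTLf.BSat {P : Type} (w : P → Bool) : LTLf P → Prop
  | .tt => True
  | .ff => False
  | .atom p => w p = true
  | .not φ => ¬ LTLf.BSat w φ
  | .and φ ψ => LTLf.BSat w φ ∧ LTLf.BSat w ψ
  | .or φ ψ => LTLf.BSat w φ ∨ LTLf.BSat w ψ
  | .wnext _ => False
  | .snext _ => False
  | .untl _ _ => False
  | .release _ _ => False
  | .glob _ => False
  | .fin _ => False

/-- The one-step realizability abstraction `φ_r`. -/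
def LTLf.osr {P : Type} : LTLf P → LTLf P
  | .tt => .tt
  | .ff => .ff
  | .atom p => .atom p
  | .not φ => .not φ.osr
  | .and φ ψ => .and φ.osr ψ.osr
  | .or φ ψ => .or φ.osr ψ.osr
  | .wnext _ => .tt
  | .snext _ => .ff
  | .untl _ ψ => ψ.osr
  | .release _ ψ => ψ.osr
  | .glob φ => φ.osr
  | .fin φ => φ.osr

/-- Mealy realizability of an LTLf formula over inputs `I` and outputs `O`:
there is a controller (whose output may depend on the history of inputs,
including the current one) such that every infinite input sequence has a finite
nonempty prefix of the combined evolution satisfying `φ`. -/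
def MealyRealizable {I O : Type} (φ : LTLf (I ⊕ O)) : Prop :=
  ∃ ρ : List (I → Bool) → (O → Bool),
    ∀ σ : ℕ → (I → Bool), ∃ k : ℕ,
      LTLf.Sat
        (List.ofFn (fun t : Fin (k + 1) =>
          Sum.elim (σ t) (ρ (List.ofFn (fun s : Fin ((t : ℕ) + 1) => σ s)))))
        φ 0

lemma sat_singleton_iff_bsat_osr {P : Type} (φ : LTLf P) (w : P → Bool) :
    LTLf.Sat [w] φ 0 ↔ LTLf.BSat w φ.osr := by
  induction φ with
  | tt => simp [LTLf.Sat, LTLf.BSat, LTLf.osr]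
  | ff => simp [LTLf.Sat, LTLf.BSat, LTLf.osr]
  | atom p => simp [LTLf.Sat, LTLf.BSat, LTLf.osr]
  | not φ ih => simp [LTLf.Sat, LTLf.BSat, LTLf.osr, ih]
  | and φ ψ ih1 ih2 => simp [LTLf.Sat, LTLf.BSat, LTLf.osr, ih1, ih2]
  | or φ ψ ih1 ih2 => simp [LTLf.Sat, LTLf.BSat, LTLf.osr, ih1, ih2]
  | wnext φ ih => simp [LTLf.Sat, LTLf.BSat, LTLf.osr]
  | snext φ ih => simp [LTLf.Sat, LTLf.BSat, LTLf.osr]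
  | untl φ ψ ih1 ih2 =>
    simp only [LTLf.Sat, LTLf.BSat, LTLf.osr, List.length_singleton, ← ih2]
    constructor
    · rintro ⟨j, -, hj, hs, -⟩
      interval_cases j
      exact hs
    · intro hs
      exact ⟨0, le_refl _, by simp, hs, fun k hk hk' => absurd (lt_of_le_of_lt hk hk') (lt_irrefl 0)⟩
  | release φ ψ ih1 ih2 =>
    simp only [LTLf.Sat, LTLf.BSat, LTLf.osr, List.length_singleton, ← ih2]
    constructor
    · intro h
      rcases h 0 (le_refl _) (by simp) with hs | ⟨k, hk, hk', -⟩
      · exact hs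
      · omega
    · intro hs j hj hj'
      interval_cases j
      exact Or.inl hs
  | glob φ ih =>
    simp only [LTLf.Sat, LTLf.BSat, LTLf.osr, List.length_singleton, ← ih]
    constructor
    · intro h; exact h 0 (le_refl _) (by simp)
    · intro hs j hj hj'; interval_cases j; exact hs
  | fin φ ih =>
    simp only [LTLf.Sat, LTLf.BSat, LTLf.osr, List.length_singleton, ← ih]
    constructor
    · rintro ⟨j, -, hj, hs⟩; interval_cases j; exact hs
    · intro hs; exact ⟨0, le_refl _, by simp, hs⟩

/-- Soundness of the one-step realizability abstraction: if the Boolean formula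
`φ_r` is realizable, then `φ` is Mealy-realizable. -/
theorem one_step_realizability_sound {I O : Type} (φ : LTLf (I ⊕ O))
    (g : (I → Bool) → (O → Bool))
    (hg : ∀ i : I → Bool, LTLf.BSat (Sum.elim i (g i)) φ.osr) :
    MealyRealizable φ := by
  refine ⟨fun l => g (l.getD (l.length - 1) (fun _ => false)), fun σ => ⟨0, ?_⟩⟩
  have : (List.ofFn (fun t : Fin (0 + 1) =>
      Sum.elim (σ t) ((fun l : List (I → Bool) => g (l.getD (l.length - 1) (fun _ => false)))
        (List.ofFn (fun s : Fin ((t : ℕ) + 1) => σ s))))) =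
      [Sum.elim (σ 0) (g (σ 0))] := by
    simp [List.ofFn_succ, List.ofFn_zero]
  rw [this, sat_singleton_iff_bsat_osr]
  exact hg (σ 0)
end
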